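/- In the setting of the preceding proposition (assumptions (A1)–(A5), (A6)₊, fixed (η,θ) ∈ (0,η₀)×(1,θ₀) with ψ = ψ(η,θ) > 0, and w(x,t) = sup_{s ≥ t} [u(x,t) − v₀(x) − θ(u(x,s) − v₀(x) + η(s−t))] where u is the Lipschitz periodic solution of (CP) and v₀ a Lipschitz periodic solution of H(x,Dv₀)=0 with 0 ≤ u − v₀ ≤ C₀): one has limsup_{t→∞} w(x,t) ≤ 0 for all x ∈ ℝⁿ, and moreover max{w(x,t), 0} → 0 as t → ∞ uniformly in x ∈ ℝⁿ. -/

import Mathlib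

noncomputable section

open Filter Set Topology

namespace HJpaper

/-- Points of `ℝⁿ` (with the Euclidean norm). -/
abbrev E (n : ℕ) := EuclideanSpace ℝ (Fin n)

/-- The vector of `ℝⁿ` with integer coordinates `k`. -/
def lat (n : ℕ) (k : Fin n → ℤ) : E n :=
  (WithLp.equiv 2 (Fin n → ℝ)).symm fun i => (k i : ℝ)

/-- `f : ℝⁿ → ℝ` is `ℤⁿ`-periodic. -/
def Per {n : ℕ} (f : E n → ℝ) : Prop :=
  ∀ (x : E n) (k : Fin n → ℤ), f (x + lat n k) = f x

/-- (A2): continuity of the Hamiltonian. -/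
def ContH {n : ℕ} (H : E n → E n → ℝ) : Prop :=
  Continuous fun q : E n × E n => H q.1 q.2

/-- (A3): `ℤⁿ`-periodicity of the Hamiltonian in `x`. -/
def PerH {n : ℕ} (H : E n → E n → ℝ) : Prop :=
  ∀ p : E n, Per fun x => H x p

/-- (A4): coercivity of the Hamiltonian. -/
def Coercive {n : ℕ} (H : E n → E n → ℝ) : Prop :=
  ∀ M : ℝ, ∃ r : ℝ, ∀ x p : E n, r ≤ ‖p‖ → M ≤ H x p

/-- viscosity subsolution of `u_t + H(x, D_x u) = 0` in `Q = ℝⁿ × (0,∞)`. -/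
def CPSub {n : ℕ} (H : E n → E n → ℝ) (u : E n → ℝ → ℝ) : Prop :=
  ∀ φ : E n → ℝ → ℝ, ContDiff ℝ 1 (fun q : E n × ℝ => φ q.1 q.2) →
    ∀ (x : E n) (t : ℝ), 0 < t →
      IsLocalMaxOn (fun q : E n × ℝ => u q.1 q.2 - φ q.1 q.2)
        {q : E n × ℝ | 0 < q.2} (x, t) →
      deriv (fun s => φ x s) t + H x (gradient (fun y => φ y t) x) ≤ 0

/-- viscosity supersolution of `u_t + H(x, D_x u) = 0` in `Q = ℝⁿ × (0,∞)`. -/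
def CPSuper {n : ℕ} (H : E n → E n → ℝ) (u : E n → ℝ → ℝ) : Prop :=
  ∀ φ : E n → ℝ → ℝ, ContDiff ℝ 1 (fun q : E n × ℝ => φ q.1 q.2) →
    ∀ (x : E n) (t : ℝ), 0 < t →
      IsLocalMinOn (fun q : E n × ℝ => u q.1 q.2 - φ q.1 q.2)
        {q : E n × ℝ | 0 < q.2} (x, t) →
      0 ≤ deriv (fun s => φ x s) t + H x (gradient (fun y => φ y t) x)

/-- viscosity solution of `u_t + H(x, D_x u) = 0` in `Q`. -/
def CPSol {n : ℕ} (H : E n → E n → ℝ) (u : E n → ℝ → ℝ) : Prop :=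
  CPSub H u ∧ CPSuper H u

/-- `u` is a solution of the Cauchy problem (CP) for the data `u₀`: it is uniformly
continuous on `ℝⁿ × [0,∞)`, `ℤⁿ`-periodic in `x`, a viscosity solution of the PDE in
`Q = ℝⁿ × (0,∞)`, and attains the initial data (continuously, by uniform continuity). -/
def IsCP {n : ℕ} (H : E n → E n → ℝ) (u₀ : E n → ℝ) (u : E n → ℝ → ℝ) : Prop :=
  UniformContinuousOn (fun q : E n × ℝ => u q.1 q.2) {q : E n × ℝ | 0 ≤ q.2} ∧
  (∀ t : ℝ, 0 ≤ t → Per fun x => u x t) ∧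
  CPSol H u ∧
  ∀ x : E n, u x 0 = u₀ x

/-- viscosity subsolution of `H(x, Dv(x)) ≤ g(x)` in `ℝⁿ`. -/
def StatSub {n : ℕ} (H : E n → E n → ℝ) (g : E n → ℝ) (v : E n → ℝ) : Prop :=
  ∀ φ : E n → ℝ, ContDiff ℝ 1 φ →
    ∀ x : E n, IsLocalMax (fun y => v y - φ y) x → H x (gradient φ x) ≤ g x

/-- viscosity supersolution of `H(x, Dv(x)) ≥ g(x)` in `ℝⁿ`. -/
def StatSuper {n : ℕ} (H : E n → E n → ℝ) (g : E n → ℝ) (v : E n → ℝ) : Prop :=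
  ∀ φ : E n → ℝ, ContDiff ℝ 1 φ →
    ∀ x : E n, IsLocalMin (fun y => v y - φ y) x → g x ≤ H x (gradient φ x)

/-- viscosity solution of `H(x, Dv(x)) = c` in `ℝⁿ`. -/
def StatSol {n : ℕ} (H : E n → E n → ℝ) (c : ℝ) (v : E n → ℝ) : Prop :=
  StatSub H (fun _ => c) v ∧ StatSuper H (fun _ => c) v

/-- Lipschitz continuity (with some constant). -/
def IsLip {n : ℕ} (f : E n → ℝ) : Prop := ∃ K : NNReal, LipschitzWith K f

/-- (A5): the additive eigenvalue is zero, i.e. `H(x,Dv)=0` has a Lipschitz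
`ℤⁿ`-periodic viscosity solution. -/
def A5 {n : ℕ} (H : E n → E n → ℝ) : Prop :=
  ∃ v : E n → ℝ, IsLip v ∧ Per v ∧ StatSol H 0 v

/-- condition (A6)₊. -/
def A6plus {n : ℕ} (H : E n → E n → ℝ) : Prop :=
  ∃ η₀ > (0:ℝ), ∃ θ₀ > (1:ℝ),
    ∀ η ∈ Set.Ioo (0:ℝ) η₀, ∀ θ ∈ Set.Ioo (1:ℝ) θ₀, ∃ ψ > (0:ℝ),
      ∀ x p q : E n, H x p ≤ 0 → η ≤ H x q → η * θ + ψ ≤ H x (p + θ • (q - p))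

/-- condition (A6)₋. -/
def A6minus {n : ℕ} (H : E n → E n → ℝ) : Prop :=
  ∃ η₀ > (0:ℝ), ∃ θ₀ > (1:ℝ),
    ∀ η ∈ Set.Ioo (0:ℝ) η₀, ∀ θ ∈ Set.Ioo (1:ℝ) θ₀, ∃ ψ > (0:ℝ),
      ∀ x p q : E n, H x p ≤ 0 → -η ≤ H x q → -(η * θ) + ψ ≤ H x (p + θ • (q - p))

/-- the modulus `ω_{H,R}`. -/
def omegaH {n : ℕ} (H : E n → E n → ℝ) (R r : ℝ) : ℝ :=
  sSup {a : ℝ | ∃ x p q : E n, ‖p‖ ≤ R ∧ ‖q‖ ≤ R ∧ ‖p - q‖ ≤ r ∧ a = |H x p - H x q|}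

/-- `w(x,t) = sup_{s ≥ t} [u(x,t) − v₀(x) − θ(u(x,s) − v₀(x) + η(s−t))]`. -/
def wPlus {n : ℕ} (u : E n → ℝ → ℝ) (v₀ : E n → ℝ) (η θ : ℝ) (x : E n) (t : ℝ) : ℝ :=
  sSup {a : ℝ | ∃ s : ℝ, t ≤ s ∧ a = u x t - v₀ x - θ * (u x s - v₀ x + η * (s - t))}

/-- `w(x,t) = max_{0 ≤ s ≤ t} [u(x,t) − v₀(x) − θ(u(x,s) − v₀(x) − η(s−t))]`. -/
def wMinus {n : ℕ} (u : E n → ℝ → ℝ) (v₀ : E n → ℝ) (η θ : ℝ) (x : E n) (t : ℝ) : ℝ :=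
  sSup {a : ℝ | ∃ s : ℝ, 0 ≤ s ∧ s ≤ t ∧ a = u x t - v₀ x - θ * (u x s - v₀ x - η * (s - t))}

variable {n : ℕ}

lemma lat_apply (k : Fin n → ℤ) (i : Fin n) : lat n k i = (k i : ℝ) := rfl

lemma exists_shift (x : E n) : ∃ k : Fin n → ℤ, ‖x + lat n k‖ ≤ Real.sqrt n := by
  refine ⟨fun i => -⌊x i⌋, ?_⟩
  rw [EuclideanSpace.norm_eq]
  have h1 : ∀ i : Fin n, ‖(x + lat n (fun i => -⌊x i⌋)) i‖ ^ 2 ≤ 1 := by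
    intro i
    have : (x + lat n (fun i => -⌊x i⌋)) i = Int.fract (x i) := by
      have : (x + lat n (fun i => -⌊x i⌋)) i = x i + ((-⌊x i⌋ : ℤ) : ℝ) := rfl
      rw [this]; push_cast; rw [← Int.self_sub_floor]; ring
    rw [this, Real.norm_eq_abs, sq_abs]
    nlinarith [Int.fract_nonneg (x i), Int.fract_lt_one (x i)]
  have h2 : (∑ i : Fin n, ‖(x + lat n (fun i => -⌊x i⌋)) i‖ ^ 2) ≤ (n : ℝ) := by
    calc (∑ i : Fin n, ‖(x + lat n (fun i => -⌊x i⌋)) i‖ ^ 2) ≤ ∑ _i : Fin n, (1:ℝ) :=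
        Finset.sum_le_sum (fun i _ => h1 i)
      _ = n := by simp
  exact Real.sqrt_le_sqrt h2

lemma bdd_of_per {f : E n → ℝ} (hp : Per f) {c : ℝ} (hc : 0 ≤ c)
    (hf : ∀ a b : E n, |f a - f b| ≤ c * ‖a - b‖) (x : E n) :
    |f x| ≤ |f 0| + c * Real.sqrt n := by
  obtain ⟨k, hk⟩ := exists_shift x
  have h0 : f x = f (x + lat n k) := (hp x k).symm
  have h1 : |f (x + lat n k) - f 0| ≤ c * ‖x + lat n k - 0‖ := hf _ _
  rw [sub_zero] at h1
  have h2 : c * ‖x + lat n k‖ ≤ c * Real.sqrt n := by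
    apply mul_le_mul_of_nonneg_left hk hc
  have h3 : |f x| ≤ |f 0| + |f (x + lat n k) - f 0| := by
    rw [h0]
    calc |f (x + lat n k)| = |f 0 + (f (x + lat n k) - f 0)| := by ring_nf
      _ ≤ |f 0| + |f (x + lat n k) - f 0| := abs_add_le _ _
  linarith

/-- helper: gradient from an fderiv of innerSL form -/
lemma hasGradientAt_of_innerSL {f : E n → ℝ} {v x : E n}
    (h : HasFDerivAt f (innerSL ℝ v) x) : HasGradientAt f v x := by
  rw [hasGradientAt_iff_hasFDerivAt]
  have hd : (InnerProductSpace.toDual ℝ (E n)) v = innerSL ℝ v := by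
    ext y; simp [InnerProductSpace.toDual_apply_apply]
  rw [hd]; exact h

/-- fderiv of `c * ‖y - a‖^2` -/
lemma hasFDerivAt_csq (c : ℝ) (a x : E n) :
    HasFDerivAt (fun y : E n => c * ‖y - a‖ ^ 2) (innerSL ℝ ((2 * c) • (x - a))) x := by
  have h1 : HasFDerivAt (fun y : E n => y - a) (ContinuousLinearMap.id ℝ (E n)) x :=
    (hasFDerivAt_id x).sub_const a
  have h2 := h1.norm_sq
  have h3 := h2.const_mul c
  refine h3.congr_fderiv ?_
  ext y
  simp [real_inner_smul_left]
  ring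

lemma hasGradientAt_csq (c : ℝ) (a x : E n) :
    HasGradientAt (fun y : E n => c * ‖y - a‖ ^ 2) ((2 * c) • (x - a)) x :=
  hasGradientAt_of_innerSL (hasFDerivAt_csq c a x)

lemma contDiff_csq (c : ℝ) (a : E n) :
    ContDiff ℝ 1 (fun y : E n => c * ‖y - a‖ ^ 2) :=
  contDiff_const.mul (((contDiff_norm_sq ℝ (n := 1)).comp (contDiff_id.sub contDiff_const)))

/-- `(max r 0)^2` is C¹ with derivative `2 * max r 0`. -/
lemma hasDerivAt_pp2 (r : ℝ) : HasDerivAt (fun s : ℝ => (max s 0) ^ 2) (2 * max r 0) r := by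
  rcases lt_trichotomy r 0 with h | h | h
  · have heq : (fun s : ℝ => (max s 0) ^ 2) =ᶠ[nhds r] (fun _ => (0:ℝ)) := by
      filter_upwards [eventually_lt_nhds h] with s hs
      rw [max_eq_right hs.le]; norm_num
    rw [max_eq_right h.le, mul_zero]
    exact (hasDerivAt_const r (0:ℝ)).congr_of_eventuallyEq heq
  · subst h
    rw [max_self, mul_zero]
    rw [hasDerivAt_iff_isLittleO]
    have : ∀ s : ℝ, (max s 0) ^ 2 - (max (0:ℝ) 0) ^ 2 - (s - 0) • (0:ℝ) = (max s 0)^2 := by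
      intro s; simp
    refine Asymptotics.isLittleO_iff.mpr ?_
    intro c hc
    have hev : ∀ᶠ s : ℝ in nhds 0, |s| < c := by
      have : Continuous fun s : ℝ => |s| := continuous_abs
      have h0 : |(0:ℝ)| < c := by simpa using hc
      exact (this.tendsto 0).eventually (Filter.Tendsto.eventually_lt_const h0 tendsto_id) |>.mono (fun s hs => hs)
    filter_upwards [hev] with s hs
    rw [this s]
    have h1 : |max s 0| ≤ |s| := by
      rcases le_or_gt s 0 with hs' | hs'
      · rw [max_eq_right hs']; simp
      · rw [max_eq_left hs'.le]
    have h2 : ‖(max s 0) ^ 2‖ = |max s 0| * |max s 0| := by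
      rw [Real.norm_eq_abs, abs_of_nonneg (sq_nonneg _), sq]
      rw [abs_of_nonneg (le_max_right s 0)]
    rw [h2]
    have : |max s 0| * |max s 0| ≤ |s| * |s| :=
      mul_le_mul h1 h1 (abs_nonneg _) (abs_nonneg _)
    have h4 : |s| * |s| ≤ c * |s| := mul_le_mul_of_nonneg_right hs.le (abs_nonneg _)
    calc |max s 0| * |max s 0| ≤ |s| * |s| := this
      _ ≤ c * |s| := h4
      _ = c * ‖s - 0‖ := by rw [sub_zero, Real.norm_eq_abs]
  · have heq : (fun s : ℝ => (max s 0) ^ 2) =ᶠ[nhds r] (fun s => s ^ 2) := by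
      filter_upwards [eventually_gt_nhds h] with s hs
      rw [max_eq_left hs.le]
    rw [max_eq_left h.le]
    have h2 : HasDerivAt (fun s : ℝ => s ^ 2) (2 * r) r := by
      simpa using (hasDerivAt_pow 2 r)
    exact h2.congr_of_eventuallyEq heq

lemma contDiff_pp2 : ContDiff ℝ 1 (fun s : ℝ => (max s 0) ^ 2) := by
  rw [contDiff_one_iff_deriv]
  constructor
  · exact fun r => (hasDerivAt_pp2 r).differentiableAt
  · have : deriv (fun s : ℝ => (max s 0) ^ 2) = fun r => 2 * max r 0 := by
      funext r; exact (hasDerivAt_pp2 r).deriv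
    rw [this]
    exact continuous_const.mul (continuous_id.max continuous_const)


lemma pen_bound {L' r α : ℝ} (hL' : 0 ≤ L') (hr : 0 ≤ r) (hα : 0 < α) :
    L' * r - α * r ^ 2 ≤ L' ^ 2 / α := by
  have key : α * (L' * r) ≤ α * (α * r ^ 2) + L' ^ 2 := by
    nlinarith [sq_nonneg (L' - α * r)]
  have h2 : L' ^ 2 = α * (L' ^ 2 / α) := by field_simp
  rw [h2] at key
  have h3 : α * (L' * r) ≤ α * (α * r ^ 2 + L' ^ 2 / α) := by linarith [key]
  have h4 := (mul_le_mul_iff_of_pos_left hα).mp h3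
  linarith

lemma pen_bound2 {L' r α : ℝ} (hr : 0 ≤ r) (hα : 0 < α) (hL' : 0 ≤ L')
    (h : α * r ^ 2 ≤ L' * r) : α * r ≤ L' := by
  rcases eq_or_lt_of_le hr with h0 | h0
  · rw [← h0]; simpa using hL'
  · have h2 : (α * r) * r ≤ L' * r := by nlinarith
    exact le_of_mul_le_mul_right h2 h0

/-- The set defining `wPlus` is nonempty. -/
lemma wset_nonempty (u : E n → ℝ → ℝ) (v₀ : E n → ℝ) (η θ : ℝ) (x : E n) (t : ℝ) :
    {a : ℝ | ∃ s : ℝ, t ≤ s ∧ a = u x t - v₀ x - θ * (u x s - v₀ x + η * (s - t))}.Nonempty :=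
  ⟨_, t, le_rfl, rfl⟩

section wlemmas

variable {u : E n → ℝ → ℝ} {v₀ : E n → ℝ} {η θ C₀ : ℝ}

lemma wset_bddAbove (hη : 0 < η) (hθ1 : 1 < θ)
    (hbd : ∀ (x : E n) (t : ℝ), 0 ≤ t → 0 ≤ u x t - v₀ x ∧ u x t - v₀ x ≤ C₀)
    (x : E n) (t : ℝ) (ht : 0 ≤ t) :
    BddAbove {a : ℝ | ∃ s : ℝ, t ≤ s ∧ a = u x t - v₀ x - θ * (u x s - v₀ x + η * (s - t))} := by
  refine ⟨C₀, fun a ha => ?_⟩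
  obtain ⟨s, hs, rfl⟩ := ha
  have h1 := (hbd x t ht).2
  have h2 := (hbd x s (le_trans ht hs)).1
  have h3 : 0 ≤ η * (s - t) := mul_nonneg hη.le (by linarith)
  nlinarith

lemma wPlus_le_C₀ (hη : 0 < η) (hθ1 : 1 < θ)
    (hbd : ∀ (x : E n) (t : ℝ), 0 ≤ t → 0 ≤ u x t - v₀ x ∧ u x t - v₀ x ≤ C₀)
    (x : E n) (t : ℝ) (ht : 0 ≤ t) : wPlus u v₀ η θ x t ≤ C₀ := by
  apply csSup_le (wset_nonempty u v₀ η θ x t)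
  intro a ha
  obtain ⟨s, hs, rfl⟩ := ha
  have h1 := (hbd x t ht).2
  have h2 := (hbd x s (le_trans ht hs)).1
  have h3 : 0 ≤ η * (s - t) := mul_nonneg hη.le (by linarith)
  nlinarith

lemma le_wPlus (hη : 0 < η) (hθ1 : 1 < θ)
    (hbd : ∀ (x : E n) (t : ℝ), 0 ≤ t → 0 ≤ u x t - v₀ x ∧ u x t - v₀ x ≤ C₀)
    (x : E n) (t s : ℝ) (ht : 0 ≤ t) (hs : t ≤ s) :
    u x t - v₀ x - θ * (u x s - v₀ x + η * (s - t)) ≤ wPlus u v₀ η θ x t :=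
  le_csSup (wset_bddAbove hη hθ1 hbd x t ht) ⟨s, hs, rfl⟩

lemma wPlus_lower (hη : 0 < η) (hθ1 : 1 < θ)
    (hbd : ∀ (x : E n) (t : ℝ), 0 ≤ t → 0 ≤ u x t - v₀ x ∧ u x t - v₀ x ≤ C₀)
    (x : E n) (t : ℝ) (ht : 0 ≤ t) : (1 - θ) * C₀ ≤ wPlus u v₀ η θ x t := by
  have h := le_wPlus hη hθ1 hbd x t t ht le_rfl
  have h1 := (hbd x t ht).1
  have h2 := (hbd x t ht).2
  nlinarith [h]

end wlemmas

set_option maxHeartbeats 3000000 in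
lemma core (H : E n → E n → ℝ) (hHc : ContH H)
    (η θ ψ : ℝ) (hη : 0 < η) (hθ1 : 1 < θ) (hψ : 0 < ψ)
    (hA6' : ∀ x p q : E n, H x p ≤ 0 → η ≤ H x q → η * θ + ψ ≤ H x (p + θ • (q - p)))
    (u : E n → ℝ → ℝ)
    (hup : ∀ t : ℝ, 0 ≤ t → Per fun x => u x t)
    (husub : CPSub H u) (husup : CPSuper H u)
    (huC : ContinuousOn (fun q : E n × ℝ => u q.1 q.2) {q : E n × ℝ | 0 ≤ q.2})
    (v₀ : E n → ℝ) (hv₀p : Per v₀) (hv₀C : Continuous v₀)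
    (hv₀sub : StatSub H (fun _ => 0) v₀)
    (C₀ : ℝ) (hC₀ : 0 < C₀)
    (hbd : ∀ (x : E n) (t : ℝ), 0 ≤ t → 0 ≤ u x t - v₀ x ∧ u x t - v₀ x ≤ C₀)
    (L : ℝ) (hL : 0 ≤ L)
    (hulip : ∀ t : ℝ, 0 ≤ t → ∀ a b : E n, |u a t - u b t| ≤ L * ‖a - b‖)
    (hvlip : ∀ a b : E n, |v₀ a - v₀ b| ≤ L * ‖a - b‖)
    (Cv Cu : ℝ) (hCv : ∀ x, |v₀ x| ≤ Cv) (hCu : ∀ (x : E n) (t : ℝ), 0 ≤ t → |u x t| ≤ Cu)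
    (t₀ t' ρ δ : ℝ) (ht₀ : 1 ≤ t₀) (ht' : t₀ < t') (hρ : 0 < ρ) (hδ : 0 < δ)
    (hwin : δ / 2 ≤ C₀ + δ - ψ / 2 * (t' + ρ - t₀)) :
    ∀ x : E n, wPlus u v₀ η θ x t' ≤ C₀ + δ - ψ / 2 * (t' - t₀) := by
  intro x₀
  by_contra hcon
  push_neg at hcon
  -- notation and basic constants
  have hθ0 : (0:ℝ) < θ := lt_trans one_pos hθ1
  have hθ1' : (0:ℝ) < θ - 1 := by linarith
  have hCv0 : 0 ≤ Cv := le_trans (abs_nonneg _) (hCv 0)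
  have hCu0 : 0 ≤ Cu := le_trans (abs_nonneg _) (hCu 0 0 le_rfl)
  obtain ⟨χ, hχ⟩ : ∃ χ : ℝ → ℝ, χ = fun t => C₀ + δ - ψ / 2 * (t - t₀) := ⟨_, rfl⟩
  obtain ⟨NB, hNB⟩ : ∃ NB : ℝ, NB = Cu + (θ - 1) * Cv + θ * Cu := ⟨_, rfl⟩
  have hNB0 : 0 ≤ NB := by
    rw [hNB]
    have h1 : 0 ≤ (θ - 1) * Cv := mul_nonneg hθ1'.le hCv0
    have h2 : 0 ≤ θ * Cu := mul_nonneg hθ0.le hCu0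
    linarith
  have hθη : 0 < θ * η := mul_pos hθ0 hη
  obtain ⟨S, hS⟩ : ∃ S : ℝ, S = (NB + C₀ + 1) / (θ * η) := ⟨_, rfl⟩
  have hS0 : 0 < S := by rw [hS]; exact div_pos (by linarith) hθη
  have hSγ : θ * η * S = NB + C₀ + 1 := by rw [hS]; field_simp
  obtain ⟨β, hβ⟩ : ∃ β : ℝ, β = (NB + 1) / ρ ^ 2 := ⟨_, rfl⟩
  have hβ0 : 0 < β := by rw [hβ]; exact div_pos (by linarith) (by positivity)
  have hβρ : β * ρ ^ 2 = NB + 1 := by rw [hβ]; field_simp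
  obtain ⟨Dn, hDn⟩ : ∃ Dn : ℝ, Dn = Real.sqrt n := ⟨_, rfl⟩
  have hDn0 : 0 ≤ Dn := by rw [hDn]; exact Real.sqrt_nonneg _
  obtain ⟨C₁, hC₁⟩ : ∃ C₁ : ℝ, C₁ = ((θ - 1) * L) ^ 2 + (θ * L) ^ 2 := ⟨_, rfl⟩
  have hC₁0 : 0 ≤ C₁ := by rw [hC₁]; positivity
  obtain ⟨α₀, hα₀⟩ : ∃ α₀ : ℝ, α₀ = NB + 1 + 2 * C₁ / δ + (θ - 1) * L + θ * L + 1 := ⟨_, rfl⟩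
  have hα₀0 : 0 < α₀ := by
    rw [hα₀]
    have h1 : 0 ≤ 2 * C₁ / δ := by positivity
    have h2 : 0 ≤ (θ - 1) * L := mul_nonneg hθ1'.le hL
    have h3 : 0 ≤ θ * L := mul_nonneg hθ0.le hL
    linarith
  obtain ⟨B, hB⟩ : ∃ B : ℝ → ℝ, B = fun t => β * (max (t - t') 0) ^ 2 := ⟨_, rfl⟩
  have hB0 : ∀ t, 0 ≤ B t := fun t => by rw [hB]; positivity
  have hBt' : B t' = 0 := by rw [hB]; simp
  have hχmono : ∀ ⦃a b : ℝ⦄, a ≤ b → χ b ≤ χ a := by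
    intro a b hab
    rw [hχ]
    have : ψ / 2 * (a - t₀) ≤ ψ / 2 * (b - t₀) :=
      mul_le_mul_of_nonneg_left (by linarith) (by linarith)
    simp only
    linarith
  have hχwin : ∀ t ≤ t' + ρ, δ / 2 ≤ χ t := by
    intro t htle
    have h1 : χ (t' + ρ) = C₀ + δ - ψ / 2 * (t' + ρ - t₀) := by rw [hχ]
    have h2 := hχmono htle
    linarith
  have ht'0 : (0:ℝ) ≤ t' := by linarith
  -- the candidate point
  obtain ⟨a₀, ha₀mem, ha₀gt⟩ :=
    exists_lt_of_lt_csSup (wset_nonempty u v₀ η θ x₀ t') hcon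
  obtain ⟨s₀, hs₀t', ha₀eq⟩ := ha₀mem
  have hχt' : χ t' = C₀ + δ - ψ / 2 * (t' - t₀) := by rw [hχ]
  have hχt'pos : δ / 2 ≤ χ t' := hχwin t' (by linarith)
  obtain ⟨Θ₀, hΘ₀⟩ : ∃ c : ℝ, c = a₀ - χ t' := ⟨_, rfl⟩
  have hΘ₀pos : 0 < Θ₀ := by rw [hΘ₀]; linarith [ha₀gt]
  have hs₀S : s₀ ≤ t' + S := by
    have h1 := (hbd x₀ t' ht'0).2
    have h2 := (hbd x₀ s₀ (le_trans ht'0 hs₀t')).1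
    have h3 : a₀ ≤ C₀ - θ * η * (s₀ - t') := by rw [ha₀eq]; nlinarith
    have h4 : 0 < a₀ := by linarith
    have h5 : θ * η * (s₀ - t') ≤ NB + C₀ := by linarith
    have h6 : θ * η * (s₀ - t') < θ * η * S := by linarith [hSγ]
    have h7 : s₀ - t' < S := lt_of_mul_lt_mul_left h6 hθη.le
    linarith
  -- expansion identity
  have hup' : ∀ t : ℝ, 0 ≤ t → ∀ (x : E n) (k : Fin n → ℤ), u (x + lat n k) t = u x t :=
    fun t ht x k => hup t ht x k
  have hexpand : ∀ (x : E n) (t s : ℝ),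
      u x t - v₀ x - θ * (u x s - v₀ x + η * (s - t))
        = u x t + (θ - 1) * v₀ x - θ * u x s - θ * η * (s - t) := by
    intro x t s; ring
  -- ======================= the main per-α construction =======================
  have hmain : ∀ α : ℝ, α₀ ≤ α → ∃ (xh yh zh a b : E n),
      ‖xh‖ ≤ Dn ∧ ‖a‖ ≤ (θ - 1) * L ∧ ‖b‖ ≤ θ * L ∧
      ‖xh - yh‖ ≤ (θ - 1) * L / α ∧ ‖xh - zh‖ ≤ θ * L / α ∧
      H yh ((-(2 / (θ - 1))) • a) ≤ 0 ∧ η ≤ H zh ((2 / θ) • b) ∧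
      H xh ((2:ℝ) • a + (2:ℝ) • b) ≤ θ * η + ψ / 2 := by
    intro α hα
    have hα0 : 0 < α := lt_of_lt_of_le hα₀0 hα
    have hαparts : NB + 1 ≤ α ∧ 2 * C₁ / δ ≤ α ∧ (θ - 1) * L ≤ α ∧ θ * L ≤ α := by
      rw [hα₀] at hα
      have h1 : 0 ≤ 2 * C₁ / δ := by positivity
      have h2 : 0 ≤ (θ - 1) * L := mul_nonneg hθ1'.le hL
      have h3 : 0 ≤ θ * L := mul_nonneg hθ0.le hL
      exact ⟨by linarith only [hα, h1, h2, h3], by linarith only [hα, h1, h2, h3, hNB0],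
        by linarith only [hα, h1, h2, h3, hNB0], by linarith only [hα, h1, h2, h3, hNB0]⟩
    obtain ⟨G, hG⟩ : ∃ G : E n → E n → E n → ℝ → ℝ → ℝ, G = fun x y z t s =>
        u x t + (θ - 1) * v₀ y - θ * u z s - θ * η * (s - t)
          - α * ‖x - y‖ ^ 2 - α * ‖x - z‖ ^ 2 - χ t - B t := ⟨_, rfl⟩
    -- pointwise bound for G
    have hGbound : ∀ (x y z : E n) (t s : ℝ), t₀ ≤ t → t ≤ t' + ρ → t ≤ s →
        G x y z t s ≤ NB - θ * η * (s - t) - α * ‖x - y‖ ^ 2 - α * ‖x - z‖ ^ 2 := by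
      intro x y z t s h1 h2 h3
      have ht0 : (0:ℝ) ≤ t := by linarith only [h1, ht₀]
      have hs0 : (0:ℝ) ≤ s := by linarith only [ht0, h3]
      have hu1 : u x t ≤ Cu := le_trans (le_abs_self _) (hCu x t ht0)
      have hv1 : v₀ y ≤ Cv := le_trans (le_abs_self _) (hCv y)
      have hu2 : -Cu ≤ u z s := neg_le_of_abs_le (hCu z s hs0)
      have hχ1 : 0 ≤ χ t := le_trans (by linarith only [hδ]) (hχwin t h2)
      have hB1 := hB0 t
      rw [hG, hNB]
      simp only
      have e1 : (θ - 1) * v₀ y ≤ (θ - 1) * Cv := mul_le_mul_of_nonneg_left hv1 hθ1'.le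
      have e2' := mul_le_mul_of_nonneg_left hu2 hθ0.le
      have e2 : -(θ * u z s) ≤ θ * Cu := by linarith only [e2']
      linarith only [hu1, e1, e2, hχ1, hB1]
    -- invariance under simultaneous integer shifts
    have hGshift : ∀ (x y z : E n) (t s : ℝ) (k : Fin n → ℤ), 0 ≤ t → 0 ≤ s →
        G (x + lat n k) (y + lat n k) (z + lat n k) t s = G x y z t s := by
      intro x y z t s k ht hs
      rw [hG]
      simp only
      rw [hup' t ht x k, hup' s hs z k, hv₀p y k]
      have e1 : x + lat n k - (y + lat n k) = x - y := by abel
      have e2 : x + lat n k - (z + lat n k) = x - z := by abel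
      rw [e1, e2]
    -- the compact domain
    obtain ⟨D, hD⟩ : ∃ D : Set ((E n × E n × E n) × ℝ × ℝ), D = {P | ‖P.1.1‖ ≤ Dn ∧
        ‖P.1.2.1‖ ≤ Dn + 1 ∧ ‖P.1.2.2‖ ≤ Dn + 1 ∧ ‖P.1.1 - P.1.2.1‖ ≤ 1 ∧
        ‖P.1.1 - P.1.2.2‖ ≤ 1 ∧ t₀ ≤ P.2.1 ∧ P.2.1 ≤ t' + ρ ∧ P.2.1 ≤ P.2.2 ∧
        P.2.2 ≤ P.2.1 + S} := ⟨_, rfl⟩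
    obtain ⟨F, hF⟩ : ∃ F : ((E n × E n × E n) × ℝ × ℝ) → ℝ,
        F = fun P => G P.1.1 P.1.2.1 P.1.2.2 P.2.1 P.2.2 := ⟨_, rfl⟩
    -- compactness of D
    have hDcpt : IsCompact D := by
      have hbox : IsCompact ((Metric.closedBall (0 : E n) Dn ×ˢ
          (Metric.closedBall (0 : E n) (Dn+1) ×ˢ Metric.closedBall (0 : E n) (Dn+1))) ×ˢ
          (Icc t₀ (t' + ρ) ×ˢ Icc t₀ (t' + ρ + S))) :=
        ((isCompact_closedBall _ _).prod ((isCompact_closedBall _ _).prod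
          (isCompact_closedBall _ _))).prod (isCompact_Icc.prod isCompact_Icc)
      apply IsCompact.of_isClosed_subset hbox
      · rw [hD]
        apply IsClosed.inter (isClosed_le (continuous_fst.fst.norm) continuous_const)
        apply IsClosed.inter (isClosed_le (continuous_fst.snd.fst.norm) continuous_const)
        apply IsClosed.inter (isClosed_le (continuous_fst.snd.snd.norm) continuous_const)
        apply IsClosed.inter (isClosed_le ((continuous_fst.fst.sub continuous_fst.snd.fst).norm) continuous_const)
        apply IsClosed.inter (isClosed_le ((continuous_fst.fst.sub continuous_fst.snd.snd).norm) continuous_const)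
        apply IsClosed.inter (isClosed_le continuous_const continuous_snd.fst)
        apply IsClosed.inter (isClosed_le continuous_snd.fst continuous_const)
        apply IsClosed.inter (isClosed_le continuous_snd.fst continuous_snd.snd)
        exact isClosed_le continuous_snd.snd (continuous_snd.fst.add continuous_const)
      · rw [hD]
        rintro ⟨⟨x, y, z⟩, t, s⟩ ⟨h1, h2, h3, h4, h5, h6, h7, h8, h9⟩
        simp only at h1 h2 h3 h4 h5 h6 h7 h8 h9
        refine ⟨⟨?_, ?_, ?_⟩, ?_, ?_⟩
        · simpa [Metric.mem_closedBall, dist_zero_right] using h1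
        · simpa [Metric.mem_closedBall, dist_zero_right] using h2
        · simpa [Metric.mem_closedBall, dist_zero_right] using h3
        · exact ⟨h6, h7⟩
        · exact ⟨by linarith only [h6, h8], by linarith only [h7, h9]⟩
    -- continuity of F on D
    have hFc : ContinuousOn F D := by
      rw [hF, hG, hD]
      have c1 : ContinuousOn (fun P : (E n × E n × E n) × ℝ × ℝ => u P.1.1 P.2.1)
          {P : (E n × E n × E n) × ℝ × ℝ | ‖P.1.1‖ ≤ Dn ∧ ‖P.1.2.1‖ ≤ Dn + 1 ∧
            ‖P.1.2.2‖ ≤ Dn + 1 ∧ ‖P.1.1 - P.1.2.1‖ ≤ 1 ∧ ‖P.1.1 - P.1.2.2‖ ≤ 1 ∧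
            t₀ ≤ P.2.1 ∧ P.2.1 ≤ t' + ρ ∧ P.2.1 ≤ P.2.2 ∧ P.2.2 ≤ P.2.1 + S} := by
        apply huC.comp ((continuous_fst.fst.prodMk continuous_snd.fst).continuousOn)
        intro P hP
        have h1 : t₀ ≤ P.2.1 := hP.2.2.2.2.2.1
        show (0:ℝ) ≤ P.2.1
        linarith only [h1, ht₀]
      have c2 : ContinuousOn (fun P : (E n × E n × E n) × ℝ × ℝ => u P.1.2.2 P.2.2)
          {P : (E n × E n × E n) × ℝ × ℝ | ‖P.1.1‖ ≤ Dn ∧ ‖P.1.2.1‖ ≤ Dn + 1 ∧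
            ‖P.1.2.2‖ ≤ Dn + 1 ∧ ‖P.1.1 - P.1.2.1‖ ≤ 1 ∧ ‖P.1.1 - P.1.2.2‖ ≤ 1 ∧
            t₀ ≤ P.2.1 ∧ P.2.1 ≤ t' + ρ ∧ P.2.1 ≤ P.2.2 ∧ P.2.2 ≤ P.2.1 + S} := by
        apply huC.comp ((continuous_fst.snd.snd.prodMk continuous_snd.snd).continuousOn)
        intro P hP
        have h1 : t₀ ≤ P.2.1 := hP.2.2.2.2.2.1
        have h2 : P.2.1 ≤ P.2.2 := hP.2.2.2.2.2.2.2.1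
        show (0:ℝ) ≤ P.2.2
        linarith only [h1, h2, ht₀]
      have c3 : Continuous (fun P : (E n × E n × E n) × ℝ × ℝ => (θ - 1) * v₀ P.1.2.1) :=
        continuous_const.mul (hv₀C.comp continuous_fst.snd.fst)
      have c4 : Continuous (fun P : (E n × E n × E n) × ℝ × ℝ => θ * η * (P.2.2 - P.2.1)) :=
        continuous_const.mul (continuous_snd.snd.sub continuous_snd.fst)
      have c5 : Continuous (fun P : (E n × E n × E n) × ℝ × ℝ => α * ‖P.1.1 - P.1.2.1‖ ^ 2) :=
        continuous_const.mul (((continuous_fst.fst.sub continuous_fst.snd.fst).norm).pow 2)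
      have c6 : Continuous (fun P : (E n × E n × E n) × ℝ × ℝ => α * ‖P.1.1 - P.1.2.2‖ ^ 2) :=
        continuous_const.mul (((continuous_fst.fst.sub continuous_fst.snd.snd).norm).pow 2)
      have c7 : Continuous (fun P : (E n × E n × E n) × ℝ × ℝ => χ P.2.1) := by
        rw [hχ]
        exact continuous_const.sub (continuous_const.mul (continuous_snd.fst.sub continuous_const))
      have c8 : Continuous (fun P : (E n × E n × E n) × ℝ × ℝ => B P.2.1) := by
        rw [hB]
        exact continuous_const.mul
          (((continuous_snd.fst.sub continuous_const).max continuous_const).pow 2)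
      exact ((((((c1.add c3.continuousOn).sub
        (continuousOn_const.mul c2)).sub c4.continuousOn).sub c5.continuousOn).sub
        c6.continuousOn).sub c7.continuousOn).sub c8.continuousOn
    -- the candidate point lies in D
    obtain ⟨k₀, hk₀⟩ := exists_shift x₀
    rw [← hDn] at hk₀
    have hP₀mem : ((x₀ + lat n k₀, x₀ + lat n k₀, x₀ + lat n k₀), t', s₀) ∈ D := by
      rw [hD]
      have e0 : x₀ + lat n k₀ - (x₀ + lat n k₀) = 0 := by abel
      refine ⟨hk₀, ?_, ?_, ?_, ?_, le_of_lt ht', by linarith only [hρ], hs₀t',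
        by linarith only [hs₀S, hρ]⟩
      · simp only; linarith only [hk₀]
      · simp only; linarith only [hk₀]
      · simp only [e0, norm_zero]; linarith only []
      · simp only [e0, norm_zero]; linarith only []
    have hFP₀ : F ((x₀ + lat n k₀, x₀ + lat n k₀, x₀ + lat n k₀), t', s₀) = Θ₀ := by
      rw [hF]
      simp only
      rw [hGshift x₀ x₀ x₀ t' s₀ k₀ ht'0 (le_trans ht'0 hs₀t')]
      rw [hG]
      simp only [sub_self, norm_zero]
      rw [hΘ₀, ha₀eq, hexpand, hBt']
      ring
    -- maximizer
    obtain ⟨Ph, hPhD, hPhmax⟩ := hDcpt.exists_isMaxOn ⟨_, hP₀mem⟩ hFc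
    obtain ⟨⟨xh, yh, zh⟩, th, sh⟩ := Ph
    have hmaxval : ∀ P ∈ D, F P ≤ F ((xh, yh, zh), th, sh) := hPhmax
    have hΘlb : Θ₀ ≤ F ((xh, yh, zh), th, sh) := by
      rw [← hFP₀]; exact hmaxval _ hP₀mem
    have hΘpos : 0 < F ((xh, yh, zh), th, sh) := lt_of_lt_of_le hΘ₀pos hΘlb
    have hFeq : F ((xh, yh, zh), th, sh) = G xh yh zh th sh := by rw [hF]
    have hΘposG : 0 < G xh yh zh th sh := by rw [← hFeq]; exact hΘpos
    -- component facts of the maximizer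
    rw [hD] at hPhD
    obtain ⟨hxhD, hyhD, hzhD, hxyD, hxzD, hthD1, hthD2, htsD, hsSD⟩ := hPhD
    simp only at hxhD hyhD hzhD hxyD hxzD hthD1 hthD2 htsD hsSD
    have hth0 : (0:ℝ) ≤ th := by linarith only [hthD1, ht₀]
    have hsh0 : (0:ℝ) ≤ sh := by linarith only [hth0, htsD]
    -- global maximality
    have hglob : ∀ (x y z : E n) (t s : ℝ), t₀ ≤ t → t ≤ t' + ρ → t ≤ s →
        G x y z t s ≤ G xh yh zh th sh := by
      intro x y z t s h1 h2 h3
      by_cases hc1 : ‖x - y‖ ≤ 1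
      · by_cases hc2 : ‖x - z‖ ≤ 1
        · by_cases hc3 : s ≤ t + S
          · -- shift into D
            obtain ⟨k, hk⟩ := exists_shift x
            rw [← hDn] at hk
            have hsht := hGshift x y z t s k (by linarith only [h1, ht₀])
              (by linarith only [h1, ht₀, h3])
            rw [← hsht, ← hFeq]
            have hFG : F ((x + lat n k, y + lat n k, z + lat n k), t, s)
                = G (x + lat n k) (y + lat n k) (z + lat n k) t s := by rw [hF]
            rw [← hFG]
            apply hmaxval
            rw [hD]
            have e1 : x + lat n k - (y + lat n k) = x - y := by abel
            have e2 : x + lat n k - (z + lat n k) = x - z := by abel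
            refine ⟨hk, ?_, ?_, by simp only [e1]; exact hc1, by simp only [e2]; exact hc2,
              h1, h2, h3, hc3⟩
            · have h5 := norm_sub_le (x + lat n k) (x - y)
              have e3 : x + lat n k - (x - y) = y + lat n k := by abel
              rw [e3] at h5
              simp only
              linarith only [h5, hk, hc1]
            · have h5 := norm_sub_le (x + lat n k) (x - z)
              have e3 : x + lat n k - (x - z) = z + lat n k := by abel
              rw [e3] at h5
              simp only
              linarith only [h5, hk, hc2]
          · -- s is too large
            push_neg at hc3
            have hb := hGbound x y z t s h1 h2 h3
            have hp1 : 0 ≤ α * ‖x - y‖ ^ 2 := by positivity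
            have hp2 : 0 ≤ α * ‖x - z‖ ^ 2 := by positivity
            have hse : NB + C₀ + 1 ≤ θ * η * (s - t) := by
              rw [← hSγ]
              exact mul_le_mul_of_nonneg_left (by linarith only [hc3]) hθη.le
            linarith only [hb, hp1, hp2, hse, hΘposG, hC₀]
        · -- ‖x - z‖ is too large
          push_neg at hc2
          have hb := hGbound x y z t s h1 h2 h3
          have hp1 : 0 ≤ α * ‖x - y‖ ^ 2 := by positivity
          have hp3 : 0 ≤ θ * η * (s - t) := mul_nonneg hθη.le (by linarith only [h3])
          have hxz1 : (1:ℝ) ≤ ‖x - z‖ ^ 2 := by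
            nlinarith only [hc2, norm_nonneg (x - z)]
          have hp2 : NB + 1 ≤ α * ‖x - z‖ ^ 2 := by
            calc NB + 1 ≤ α := hαparts.1
              _ = α * 1 := by ring
              _ ≤ α * ‖x - z‖ ^ 2 := mul_le_mul_of_nonneg_left hxz1 hα0.le
          linarith only [hb, hp1, hp3, hp2, hΘposG]
      · -- ‖x - y‖ is too large
        push_neg at hc1
        have hb := hGbound x y z t s h1 h2 h3
        have hp1 : 0 ≤ α * ‖x - z‖ ^ 2 := by positivity
        have hp3 : 0 ≤ θ * η * (s - t) := mul_nonneg hθη.le (by linarith only [h3])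
        have hxy1 : (1:ℝ) ≤ ‖x - y‖ ^ 2 := by
          nlinarith only [hc1, norm_nonneg (x - y)]
        have hp2 : NB + 1 ≤ α * ‖x - y‖ ^ 2 := by
          calc NB + 1 ≤ α := hαparts.1
            _ = α * 1 := by ring
            _ ≤ α * ‖x - y‖ ^ 2 := mul_le_mul_of_nonneg_left hxy1 hα0.le
        linarith only [hb, hp1, hp3, hp2, hΘposG]
    -- division facts
    have hC₁α : C₁ / α ≤ δ / 2 := by
      have h2CC : 2 * C₁ ≤ α * δ := (div_le_iff₀ hδ).mp hαparts.2.1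
      rw [div_le_iff₀ hα0]
      nlinarith only [h2CC]
    -- Lipschitz replacement estimates
    have hvyx : v₀ yh - v₀ xh ≤ L * ‖xh - yh‖ := by
      have h := hvlip yh xh
      rw [norm_sub_rev yh xh] at h
      exact le_trans (le_abs_self _) h
    have huzx : ∀ s : ℝ, 0 ≤ s → u xh s - u zh s ≤ L * ‖xh - zh‖ :=
      fun s hs => le_trans (le_abs_self _) (hulip s hs xh zh)
    -- closeness of yh to xh
    have hkey1 : α * ‖xh - yh‖ ^ 2 ≤ (θ - 1) * L * ‖xh - yh‖ := by
      have hcmp := hglob xh xh zh th sh hthD1 hthD2 htsD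
      rw [hG] at hcmp
      simp only at hcmp
      have e0 : α * ‖xh - xh‖ ^ 2 = 0 := by simp
      have hint := mul_nonneg hθ1'.le (sub_nonneg.mpr hvyx)
      nlinarith only [hcmp, e0, hint]
    have hay : α * ‖xh - yh‖ ≤ (θ - 1) * L :=
      pen_bound2 (norm_nonneg _) hα0 (mul_nonneg hθ1'.le hL) hkey1
    -- closeness of zh to xh
    have hkey2 : α * ‖xh - zh‖ ^ 2 ≤ θ * L * ‖xh - zh‖ := by
      have hcmp := hglob xh yh xh th sh hthD1 hthD2 htsD
      rw [hG] at hcmp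
      simp only at hcmp
      have e0 : α * ‖xh - xh‖ ^ 2 = 0 := by simp
      have hint := mul_nonneg hθ0.le (sub_nonneg.mpr (huzx sh hsh0))
      nlinarith only [hcmp, e0, hint]
    have haz : α * ‖xh - zh‖ ≤ θ * L :=
      pen_bound2 (norm_nonneg _) hα0 (mul_nonneg hθ0.le hL) hkey2
    -- penalization pen bounds
    have hpb1 : (θ - 1) * L * ‖xh - yh‖ - α * ‖xh - yh‖ ^ 2 ≤ ((θ - 1) * L) ^ 2 / α :=
      pen_bound (mul_nonneg hθ1'.le hL) (norm_nonneg _) hα0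
    have hpb2 : θ * L * ‖xh - zh‖ - α * ‖xh - zh‖ ^ 2 ≤ (θ * L) ^ 2 / α :=
      pen_bound (mul_nonneg hθ0.le hL) (norm_nonneg _) hα0
    have hpbsum : ((θ - 1) * L) ^ 2 / α + (θ * L) ^ 2 / α = C₁ / α := by
      rw [hC₁, add_div]
    -- replacement bound for G at the maximizer with arbitrary t, s = sh
    have hGrep : ∀ t : ℝ, 0 ≤ t →
        G xh yh zh t sh ≤ (u xh t + (θ - 1) * v₀ xh - θ * u xh sh - θ * η * (sh - t))
          + C₁ / α - χ t - B t := by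
      intro t ht
      rw [hG]
      simp only
      have hint1 := mul_nonneg hθ1'.le (sub_nonneg.mpr hvyx)
      have hint2 := mul_nonneg hθ0.le (sub_nonneg.mpr (huzx sh hsh0))
      nlinarith only [hint1, hint2, hpb1, hpb2, hpbsum]
    -- th > t₀
    have hth_gt : t₀ < th := by
      rcases lt_or_eq_of_le hthD1 with h | h
      · exact h
      · exfalso
        have hrep := hGrep th hth0
        have hbr : u xh th + (θ - 1) * v₀ xh - θ * u xh sh - θ * η * (sh - th) ≤ C₀ := by
          rw [← hexpand]
          refine le_trans (le_wPlus hη hθ1 hbd xh th sh hth0 htsD) ?_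
          exact wPlus_le_C₀ hη hθ1 hbd xh th hth0
        have hχth : χ th = C₀ + δ := by rw [hχ, ← h]; simp
        have hBth := hB0 th
        have := hΘlb
        rw [hFeq] at this
        linarith only [this, hrep, hbr, hχth, hBth, hC₁α, hδ, hΘ₀pos]
    -- th < t' + ρ
    have hth_lt : th < t' + ρ := by
      rcases lt_or_eq_of_le hthD2 with h | h
      · exact h
      · exfalso
        have hBth : B th = NB + 1 := by
          rw [hB, h]
          simp only
          have e1 : t' + ρ - t' = ρ := by ring
          rw [e1, max_eq_left hρ.le, hβρ]
        have hb := hGbound xh yh zh th sh hthD1 hthD2 htsD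
        -- refined bound keeping B: redo directly
        have hu1 : u xh th ≤ Cu := le_trans (le_abs_self _) (hCu xh th hth0)
        have hv1 : v₀ yh ≤ Cv := le_trans (le_abs_self _) (hCv yh)
        have hu2 : -Cu ≤ u zh sh := neg_le_of_abs_le (hCu zh sh hsh0)
        have e2' := mul_le_mul_of_nonneg_left hu2 hθ0.le
        have hχ1 : 0 ≤ χ th := le_trans (by linarith only [hδ]) (hχwin th hthD2)
        have hp1 : 0 ≤ α * ‖xh - yh‖ ^ 2 := by positivity
        have hp2 : 0 ≤ α * ‖xh - zh‖ ^ 2 := by positivity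
        have hp3 : 0 ≤ θ * η * (sh - th) := mul_nonneg hθη.le (by linarith only [htsD])
        have hv2 := mul_le_mul_of_nonneg_left hv1 hθ1'.le
        have hGle : G xh yh zh th sh ≤ NB - B th := by
          rw [hG, hNB]
          simp only
          linarith only [hu1, hv2, e2', hχ1, hp1, hp2, hp3]
        rw [hBth] at hGle
        have := hΘlb
        rw [hFeq] at this
        linarith only [this, hGle, hΘ₀pos]
    -- th < sh
    have hts_lt : th < sh := by
      rcases lt_or_eq_of_le htsD with h | h
      · exact h
      · exfalso
        have hrep := hGrep th hth0
        rw [← h] at hrep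
        have hbd1 := (hbd xh th hth0).1
        have hint := mul_nonneg hθ1'.le hbd1
        have hχth : δ / 2 ≤ χ th := hχwin th hthD2
        have hBth := hB0 th
        have hfin := hΘlb
        rw [hFeq, ← h] at hfin
        have hsub : θ * η * (th - th) = 0 := by ring
        linarith only [hfin, hrep, hint, hχth, hBth, hC₁α, hΘ₀pos, hsub]
    have hth_pos : (0:ℝ) < th := by linarith only [hth_gt, ht₀]
    have hsh_pos : (0:ℝ) < sh := by linarith only [hts_lt, hth_pos]
    -- ===== (T1): stationary subsolution test for v₀ at yh =====
    have hT1 : H yh ((-(2 / (θ - 1))) • (α • (xh - yh))) ≤ 0 := by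
      have hmax1 : IsLocalMax (fun y => v₀ y - (α / (θ - 1)) * ‖y - xh‖ ^ 2) yh := by
        apply Filter.Eventually.of_forall
        intro y
        have hcmp := hglob xh y zh th sh hthD1 hthD2 htsD
        rw [hG] at hcmp
        simp only at hcmp
        have hkey : (θ - 1) * v₀ y - α * ‖xh - y‖ ^ 2
            ≤ (θ - 1) * v₀ yh - α * ‖xh - yh‖ ^ 2 := by
          linarith only [hcmp]
        have hexp : (v₀ yh - (α / (θ - 1)) * ‖yh - xh‖ ^ 2)
            - (v₀ y - (α / (θ - 1)) * ‖y - xh‖ ^ 2)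
            = (1 / (θ - 1)) * (((θ - 1) * v₀ yh - α * ‖xh - yh‖ ^ 2)
              - ((θ - 1) * v₀ y - α * ‖xh - y‖ ^ 2)) := by
          rw [norm_sub_rev yh xh, norm_sub_rev y xh]
          field_simp
        have h0 : 0 ≤ (v₀ yh - (α / (θ - 1)) * ‖yh - xh‖ ^ 2)
            - (v₀ y - (α / (θ - 1)) * ‖y - xh‖ ^ 2) := by
          rw [hexp]
          have h1 : (0:ℝ) ≤ 1 / (θ - 1) := by positivity
          exact mul_nonneg h1 (by linarith only [hkey])
        linarith only [h0]
      have hsub := hv₀sub (fun y => (α / (θ - 1)) * ‖y - xh‖ ^ 2)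
        (contDiff_csq _ _) yh hmax1
      have hgrad : gradient (fun y : E n => (α / (θ - 1)) * ‖y - xh‖ ^ 2) yh
          = (-(2 / (θ - 1))) • (α • (xh - yh)) := by
        have hne : (θ:ℝ) - 1 ≠ 0 := ne_of_gt hθ1'
        rw [(hasGradientAt_csq (α / (θ - 1)) xh yh).gradient]
        rw [smul_smul]
        rw [show xh - yh = -(yh - xh) by abel, smul_neg, ← neg_smul]
        congr 1
        field_simp
      rw [hgrad] at hsub
      simpa using hsub
    -- ===== (T2): supersolution test for u at (zh, sh) =====
    have hT2 : η ≤ H zh ((2 / θ) • (α • (xh - zh))) := by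
      have hφc : ContDiff ℝ 1 (fun q : E n × ℝ =>
          (-(α / θ)) * ‖q.1 - xh‖ ^ 2 - η * q.2) :=
        ((contDiff_csq (-(α / θ)) xh).comp contDiff_fst).sub
          (contDiff_const.mul contDiff_snd)
      have hmin2 : IsLocalMinOn (fun q : E n × ℝ => u q.1 q.2 -
          ((-(α / θ)) * ‖q.1 - xh‖ ^ 2 - η * q.2)) {q : E n × ℝ | 0 < q.2} (zh, sh) := by
        have hopen : IsOpen {q : E n × ℝ | th < q.2} :=
          isOpen_lt continuous_const continuous_snd
        have hmem : (zh, sh) ∈ {q : E n × ℝ | th < q.2} := hts_lt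
        have hforall : ∀ q ∈ {q : E n × ℝ | th < q.2},
            (fun q : E n × ℝ => u q.1 q.2 -
              ((-(α / θ)) * ‖q.1 - xh‖ ^ 2 - η * q.2)) (zh, sh)
            ≤ (fun q : E n × ℝ => u q.1 q.2 -
              ((-(α / θ)) * ‖q.1 - xh‖ ^ 2 - η * q.2)) q := by
          rintro ⟨z, s⟩ hzs
          have hs : th ≤ s := le_of_lt hzs
          have hcmp := hglob xh yh z th s hthD1 hthD2 hs
          rw [hG] at hcmp
          simp only at hcmp
          have hkey : θ * u zh sh + α * ‖xh - zh‖ ^ 2 + θ * η * (sh - th)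
              ≤ θ * u z s + α * ‖xh - z‖ ^ 2 + θ * η * (s - th) := by
            linarith only [hcmp]
          simp only
          have hexp : (u z s - ((-(α / θ)) * ‖z - xh‖ ^ 2 - η * s))
              - (u zh sh - ((-(α / θ)) * ‖zh - xh‖ ^ 2 - η * sh))
              = (1 / θ) * ((θ * u z s + α * ‖xh - z‖ ^ 2 + θ * η * (s - th))
                - (θ * u zh sh + α * ‖xh - zh‖ ^ 2 + θ * η * (sh - th))) := by
            rw [norm_sub_rev z xh, norm_sub_rev zh xh]
            field_simp
            ring
          have h0 : 0 ≤ (u z s - ((-(α / θ)) * ‖z - xh‖ ^ 2 - η * s))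
              - (u zh sh - ((-(α / θ)) * ‖zh - xh‖ ^ 2 - η * sh)) := by
            rw [hexp]
            have h1 : (0:ℝ) ≤ 1 / θ := by positivity
            exact mul_nonneg h1 (by linarith only [hkey])
          linarith only [h0]
        exact (Filter.eventually_of_mem (hopen.mem_nhds hmem) hforall).filter_mono
          nhdsWithin_le_nhds
      have hres := husup (fun z s => (-(α / θ)) * ‖z - xh‖ ^ 2 - η * s) hφc zh sh hsh_pos hmin2
      have hd : deriv (fun s : ℝ => (-(α / θ)) * ‖zh - xh‖ ^ 2 - η * s) sh = 0 - η * 1 :=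
        ((hasDerivAt_const sh ((-(α / θ)) * ‖zh - xh‖ ^ 2)).sub
          ((hasDerivAt_id sh).const_mul η)).deriv
      have hgr : gradient (fun z : E n => (-(α / θ)) * ‖z - xh‖ ^ 2 - η * sh) zh
          = (2 / θ) • (α • (xh - zh)) := by
        have h1 : HasFDerivAt (fun z : E n => (-(α / θ)) * ‖z - xh‖ ^ 2 - η * sh)
            (innerSL ℝ ((2 * (-(α / θ))) • (zh - xh))) zh :=
          (hasFDerivAt_csq (-(α / θ)) xh zh).sub_const (η * sh)
        have hne : (θ:ℝ) ≠ 0 := ne_of_gt hθ0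
        rw [(hasGradientAt_of_innerSL h1).gradient]
        rw [smul_smul]
        rw [show zh - xh = -(xh - zh) by abel, smul_neg, ← neg_smul]
        congr 1
        field_simp
      rw [hd, hgr] at hres
      linarith only [hres]
    -- ===== (T3): subsolution test for u at (xh, th) =====
    have hT3 : H xh ((2:ℝ) • (α • (xh - yh)) + (2:ℝ) • (α • (xh - zh))) ≤ θ * η + ψ / 2 := by
      have hφc : ContDiff ℝ 1 (fun q : E n × ℝ =>
          (α * ‖q.1 - yh‖ ^ 2 + α * ‖q.1 - zh‖ ^ 2) +
          ((C₀ + δ - ψ / 2 * (q.2 - t₀)) + β * (max (q.2 - t') 0) ^ 2 - θ * η * q.2)) := by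
        refine ContDiff.add (ContDiff.add ?_ ?_) (ContDiff.sub (ContDiff.add ?_ ?_) ?_)
        · exact (contDiff_csq α yh).comp contDiff_fst
        · exact (contDiff_csq α zh).comp contDiff_fst
        · exact contDiff_const.sub
            (contDiff_const.mul (contDiff_snd.sub contDiff_const))
        · exact contDiff_const.mul (contDiff_pp2.comp (contDiff_snd.sub contDiff_const))
        · exact contDiff_const.mul contDiff_snd
      have hmax3 : IsLocalMaxOn (fun q : E n × ℝ => u q.1 q.2 -
          ((α * ‖q.1 - yh‖ ^ 2 + α * ‖q.1 - zh‖ ^ 2) +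
          ((C₀ + δ - ψ / 2 * (q.2 - t₀)) + β * (max (q.2 - t') 0) ^ 2 - θ * η * q.2)))
          {q : E n × ℝ | 0 < q.2} (xh, th) := by
        have hopen : IsOpen {q : E n × ℝ | t₀ < q.2 ∧ q.2 < t' + ρ ∧ q.2 < sh} := by
          refine IsOpen.inter (isOpen_lt continuous_const continuous_snd) ?_
          exact IsOpen.inter (isOpen_lt continuous_snd continuous_const)
            (isOpen_lt continuous_snd continuous_const)
        have hmem : (xh, th) ∈ {q : E n × ℝ | t₀ < q.2 ∧ q.2 < t' + ρ ∧ q.2 < sh} :=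
          ⟨hth_gt, hth_lt, hts_lt⟩
        have hforall : ∀ q ∈ {q : E n × ℝ | t₀ < q.2 ∧ q.2 < t' + ρ ∧ q.2 < sh},
            (fun q : E n × ℝ => u q.1 q.2 -
              ((α * ‖q.1 - yh‖ ^ 2 + α * ‖q.1 - zh‖ ^ 2) +
              ((C₀ + δ - ψ / 2 * (q.2 - t₀)) + β * (max (q.2 - t') 0) ^ 2 - θ * η * q.2))) q
            ≤ (fun q : E n × ℝ => u q.1 q.2 -
              ((α * ‖q.1 - yh‖ ^ 2 + α * ‖q.1 - zh‖ ^ 2) +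
              ((C₀ + δ - ψ / 2 * (q.2 - t₀)) + β * (max (q.2 - t') 0) ^ 2 - θ * η * q.2)))
              (xh, th) := by
          rintro ⟨x, t⟩ ⟨h1, h2, h3⟩
          have hcmp := hglob x yh zh t sh (le_of_lt h1) (le_of_lt h2) (le_of_lt h3)
          rw [hG, hχ, hB] at hcmp
          simp only at hcmp
          simp only
          have e1 : ∀ r : ℝ, ‖r • (0:ℝ)‖ = 0 := by intro r; simp
          linarith only [hcmp]
        exact (Filter.eventually_of_mem (hopen.mem_nhds hmem) hforall).filter_mono
          nhdsWithin_le_nhds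
      have hres := husub (fun x t => (α * ‖x - yh‖ ^ 2 + α * ‖x - zh‖ ^ 2) +
          ((C₀ + δ - ψ / 2 * (t - t₀)) + β * (max (t - t') 0) ^ 2 - θ * η * t))
        hφc xh th hth_pos hmax3
      have hd : deriv (fun t : ℝ => (α * ‖xh - yh‖ ^ 2 + α * ‖xh - zh‖ ^ 2) +
          ((C₀ + δ - ψ / 2 * (t - t₀)) + β * (max (t - t') 0) ^ 2 - θ * η * t)) th
          = 0 + (-(ψ / 2 * 1) + β * (2 * max (th - t') 0 * 1) - θ * η * 1) := by
        have hA : HasDerivAt (fun t : ℝ => C₀ + δ - ψ / 2 * (t - t₀)) (-(ψ / 2 * 1)) th :=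
          HasDerivAt.const_sub _ (((hasDerivAt_id th).sub_const t₀).const_mul (ψ / 2))
        have hB2 : HasDerivAt (fun t : ℝ => β * (max (t - t') 0) ^ 2)
            (β * (2 * max (th - t') 0 * 1)) th := by
          have hcomp := (hasDerivAt_pp2 (th - t')).comp th ((hasDerivAt_id th).sub_const t')
          exact hcomp.const_mul β
        have hC : HasDerivAt (fun t : ℝ => θ * η * t) (θ * η * 1) th :=
          (hasDerivAt_id th).const_mul (θ * η)
        exact ((hasDerivAt_const th (α * ‖xh - yh‖ ^ 2 + α * ‖xh - zh‖ ^ 2)).add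
          ((hA.add hB2).sub hC)).deriv
      have hgr : gradient (fun x : E n => (α * ‖x - yh‖ ^ 2 + α * ‖x - zh‖ ^ 2) +
          ((C₀ + δ - ψ / 2 * (th - t₀)) + β * (max (th - t') 0) ^ 2 - θ * η * th)) xh
          = (2:ℝ) • (α • (xh - yh)) + (2:ℝ) • (α • (xh - zh)) := by
        have h1 : HasFDerivAt (fun x : E n => α * ‖x - yh‖ ^ 2 + α * ‖x - zh‖ ^ 2)
            (innerSL ℝ ((2 * α) • (xh - yh) + (2 * α) • (xh - zh))) xh := by
          have h2 := (hasFDerivAt_csq α yh xh).add (hasFDerivAt_csq α zh xh)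
          rwa [← map_add] at h2
        have h3 := h1.add_const ((C₀ + δ - ψ / 2 * (th - t₀)) +
          β * (max (th - t') 0) ^ 2 - θ * η * th)
        rw [(hasGradientAt_of_innerSL h3).gradient]
        rw [smul_smul, smul_smul]
      rw [hd, hgr] at hres
      have hpos : 0 ≤ β * (2 * max (th - t') 0 * 1) := by positivity
      linarith only [hres, hpos]
    -- assemble
    refine ⟨xh, yh, zh, α • (xh - yh), α • (xh - zh), hxhD, ?_, ?_, ?_, ?_, hT1, hT2, hT3⟩
    · rw [norm_smul, Real.norm_eq_abs, abs_of_pos hα0]; exact hay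
    · rw [norm_smul, Real.norm_eq_abs, abs_of_pos hα0]; exact haz
    · rw [le_div_iff₀ hα0]; linarith only [hay]
    · rw [le_div_iff₀ hα0]; linarith only [haz]
  -- ======================= pass to the limit =======================
  have hseq : ∀ j : ℕ, α₀ ≤ α₀ + (j : ℝ) := fun j => by
    have h := Nat.cast_nonneg (α := ℝ) j
    linarith only [h]
  choose xf yf zf af bf hxK haK hbK hxyC hxzC hI1 hI2 hI3 using
    fun j : ℕ => hmain (α₀ + (j : ℝ)) (hseq j)
  have hKcpt : IsCompact ((Metric.closedBall (0:E n) Dn) ×ˢ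
      ((Metric.closedBall (0:E n) ((θ-1)*L)) ×ˢ (Metric.closedBall (0:E n) (θ*L)))) :=
    (isCompact_closedBall _ _).prod ((isCompact_closedBall _ _).prod (isCompact_closedBall _ _))
  have hKmem : ∀ j : ℕ, ((xf j, af j, bf j) : E n × E n × E n) ∈
      (Metric.closedBall (0:E n) Dn) ×ˢ
      ((Metric.closedBall (0:E n) ((θ-1)*L)) ×ˢ (Metric.closedBall (0:E n) (θ*L))) := by
    intro j
    refine ⟨mem_closedBall_zero_iff.mpr (hxK j),
      mem_closedBall_zero_iff.mpr (haK j), mem_closedBall_zero_iff.mpr (hbK j)⟩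
  obtain ⟨⟨xs, as, bs⟩, hKlim, φf, hφmono, hconv⟩ := hKcpt.tendsto_subseq hKmem
  have hx_t : Tendsto (fun j => xf (φf j)) atTop (𝓝 xs) :=
    (continuous_fst.tendsto _).comp hconv
  have ha_t : Tendsto (fun j => af (φf j)) atTop (𝓝 as) :=
    ((continuous_fst.comp continuous_snd).tendsto _).comp hconv
  have hb_t : Tendsto (fun j => bf (φf j)) atTop (𝓝 bs) :=
    ((continuous_snd.comp continuous_snd).tendsto _).comp hconv
  have hα_t : Tendsto (fun j => α₀ + ((φf j : ℕ) : ℝ)) atTop atTop :=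
    tendsto_atTop_add_const_left _ α₀ (tendsto_natCast_atTop_atTop.comp hφmono.tendsto_atTop)
  have hinv_t : Tendsto (fun j => (α₀ + ((φf j : ℕ) : ℝ))⁻¹) atTop (𝓝 0) :=
    hα_t.inv_tendsto_atTop
  -- yf (φf j) → xs and zf (φf j) → xs
  have hy_t : Tendsto (fun j => yf (φf j)) atTop (𝓝 xs) := by
    rw [tendsto_iff_dist_tendsto_zero]
    have hb1 : ∀ j, dist (yf (φf j)) xs ≤
        (θ - 1) * L * (α₀ + ((φf j : ℕ) : ℝ))⁻¹ + dist (xf (φf j)) xs := by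
      intro j
      have h1 := dist_triangle (yf (φf j)) (xf (φf j)) xs
      have h2 : dist (yf (φf j)) (xf (φf j)) = ‖xf (φf j) - yf (φf j)‖ := by
        rw [dist_eq_norm, norm_sub_rev]
      have h3 := hxyC (φf j)
      rw [div_eq_mul_inv] at h3
      linarith only [h1, h2.le, h2.ge, h3]
    have hb2 : Tendsto (fun j => (θ - 1) * L * (α₀ + ((φf j : ℕ) : ℝ))⁻¹
        + dist (xf (φf j)) xs) atTop (𝓝 0) := by
      have t1 : Tendsto (fun j => (θ - 1) * L * (α₀ + ((φf j : ℕ) : ℝ))⁻¹) atTop (𝓝 0) := by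
        have := hinv_t.const_mul ((θ - 1) * L)
        simpa using this
      have t2 : Tendsto (fun j => dist (xf (φf j)) xs) atTop (𝓝 0) :=
        tendsto_iff_dist_tendsto_zero.mp hx_t
      simpa using t1.add t2
    exact squeeze_zero (fun j => dist_nonneg) hb1 hb2
  have hz_t : Tendsto (fun j => zf (φf j)) atTop (𝓝 xs) := by
    rw [tendsto_iff_dist_tendsto_zero]
    have hb1 : ∀ j, dist (zf (φf j)) xs ≤
        θ * L * (α₀ + ((φf j : ℕ) : ℝ))⁻¹ + dist (xf (φf j)) xs := by
      intro j
      have h1 := dist_triangle (zf (φf j)) (xf (φf j)) xs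
      have h2 : dist (zf (φf j)) (xf (φf j)) = ‖xf (φf j) - zf (φf j)‖ := by
        rw [dist_eq_norm, norm_sub_rev]
      have h3 := hxzC (φf j)
      rw [div_eq_mul_inv] at h3
      linarith only [h1, h2.le, h2.ge, h3]
    have hb2 : Tendsto (fun j => θ * L * (α₀ + ((φf j : ℕ) : ℝ))⁻¹
        + dist (xf (φf j)) xs) atTop (𝓝 0) := by
      have t1 : Tendsto (fun j => θ * L * (α₀ + ((φf j : ℕ) : ℝ))⁻¹) atTop (𝓝 0) := by
        have := hinv_t.const_mul (θ * L)
        simpa using this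
      have t2 : Tendsto (fun j => dist (xf (φf j)) xs) atTop (𝓝 0) :=
        tendsto_iff_dist_tendsto_zero.mp hx_t
      simpa using t1.add t2
    exact squeeze_zero (fun j => dist_nonneg) hb1 hb2
  -- limits of the three inequalities
  have hcont : Continuous fun q : E n × E n => H q.1 q.2 := hHc
  have hL1 : H xs ((-(2 / (θ - 1))) • as) ≤ 0 := by
    have lim1 : Tendsto (fun j => H (yf (φf j)) ((-(2 / (θ - 1))) • af (φf j))) atTop
        (𝓝 (H xs ((-(2 / (θ - 1))) • as))) :=
      (hcont.tendsto _).comp (hy_t.prodMk_nhds (ha_t.const_smul _))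
    exact le_of_tendsto' lim1 (fun j => hI1 (φf j))
  have hL2 : η ≤ H xs ((2 / θ) • bs) := by
    have lim2 : Tendsto (fun j => H (zf (φf j)) ((2 / θ) • bf (φf j))) atTop
        (𝓝 (H xs ((2 / θ) • bs))) :=
      (hcont.tendsto _).comp (hz_t.prodMk_nhds (hb_t.const_smul _))
    exact ge_of_tendsto' lim2 (fun j => hI2 (φf j))
  have hL3 : H xs ((2:ℝ) • as + (2:ℝ) • bs) ≤ θ * η + ψ / 2 := by
    have lim3 : Tendsto (fun j => H (xf (φf j))
        ((2:ℝ) • af (φf j) + (2:ℝ) • bf (φf j))) atTop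
        (𝓝 (H xs ((2:ℝ) • as + (2:ℝ) • bs))) :=
      (hcont.tendsto _).comp (hx_t.prodMk_nhds ((ha_t.const_smul _).add (hb_t.const_smul _)))
    exact le_of_tendsto' lim3 (fun j => hI3 (φf j))
  -- conclude via (A6)+
  have hfin := hA6' xs ((-(2 / (θ - 1))) • as) ((2 / θ) • bs) hL1 hL2
  have hid : ((-(2 / (θ - 1))) • as) + θ • (((2 / θ) • bs) - ((-(2 / (θ - 1))) • as))
      = (2:ℝ) • as + (2:ℝ) • bs := by
    have hne : (θ:ℝ) - 1 ≠ 0 := by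
      have : (0:ℝ) < θ - 1 := by linarith only [hθ1]
      exact ne_of_gt this
    have hne2 : (θ:ℝ) ≠ 0 := by
      have : (0:ℝ) < θ := by linarith only [hθ1]
      exact ne_of_gt this
    have e : ((-(2 / (θ - 1))) • as) + θ • (((2 / θ) • bs) - ((-(2 / (θ - 1))) • as))
        = ((-(2 / (θ - 1))) - θ * (-(2 / (θ - 1)))) • as + (θ * (2 / θ)) • bs := by
      rw [smul_sub, smul_smul, smul_smul, sub_smul]
      abel
    have h2 : (θ - 1) * (2 / (θ - 1)) = 2 := by
      rw [mul_comm, div_mul_cancel₀ _ hne]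
    have h3 : θ * (2 / θ) = 2 := by
      rw [mul_comm, div_mul_cancel₀ _ hne2]
    rw [e, h3]
    rw [show (-(2 / (θ - 1))) - θ * (-(2 / (θ - 1))) = 2 by linear_combination h2]
  rw [hid] at hfin
  linarith only [hfin, hL3, hψ]

/-- `limsup_{t→∞} w(x,t) ≤ 0` and `max{w,0} → 0` uniformly, in the setting
of the key proposition under (A6)₊. -/
theorem stmt_8 {n : ℕ} (H : E n → E n → ℝ) (u₀ : E n → ℝ)
    (hHc : ContH H) (hHp : PerH H) (hco : Coercive H) (hA5 : A5 H)
    (hu₀l : IsLip u₀) (hu₀p : Per u₀)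
    (hA6 : A6plus H)
    (η₀ θ₀ η θ ψ : ℝ) (hη₀ : 0 < η₀) (hθ₀ : 1 < θ₀)
    (hη : η ∈ Set.Ioo 0 η₀) (hθ : θ ∈ Set.Ioo 1 θ₀) (hψ : 0 < ψ)
    (hA6' : ∀ x p q : E n, H x p ≤ 0 → η ≤ H x q → η * θ + ψ ≤ H x (p + θ • (q - p)))
    (u : E n → ℝ → ℝ) (hu : IsCP H u₀ u)
    (huLip : ∃ K : NNReal,
      LipschitzOnWith K (fun q : E n × ℝ => u q.1 q.2) {q : E n × ℝ | 0 ≤ q.2})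
    (v₀ : E n → ℝ) (hv₀p : Per v₀) (hv₀ : StatSol H 0 v₀)
    (C₀ : ℝ) (hC₀ : 0 < C₀)
    (hbd : ∀ (x : E n) (t : ℝ), 0 ≤ t → 0 ≤ u x t - v₀ x ∧ u x t - v₀ x ≤ C₀)
    (L : ℝ) (hL : 0 ≤ L)
    (huL : ∀ t : ℝ, 0 ≤ t → LipschitzWith L.toNNReal fun x => u x t)
    (hvL : LipschitzWith L.toNNReal v₀) :
    (∀ x : E n, Filter.limsup (fun t : ℝ => wPlus u v₀ η θ x t) atTop ≤ 0) ∧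
    TendstoUniformly (fun (t : ℝ) (x : E n) => max (wPlus u v₀ η θ x t) 0)
      (fun _ => (0:ℝ)) atTop := by
  obtain ⟨K, hK⟩ := huLip
  have huC : ContinuousOn (fun q : E n × ℝ => u q.1 q.2) {q : E n × ℝ | 0 ≤ q.2} :=
    hK.continuousOn
  have hup := hu.2.1
  have husub := hu.2.2.1.1
  have husup := hu.2.2.1.2
  have hv₀C : Continuous v₀ := hvL.continuous
  have hv₀sub := hv₀.1
  have hLc : ((L.toNNReal : ℝ)) = L := Real.coe_toNNReal L hL
  have hulip : ∀ t : ℝ, 0 ≤ t → ∀ a b : E n, |u a t - u b t| ≤ L * ‖a - b‖ := by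
    intro t ht a b
    have h := (huL t ht).dist_le_mul a b
    rw [Real.dist_eq, dist_eq_norm, hLc] at h
    exact h
  have hvlip : ∀ a b : E n, |v₀ a - v₀ b| ≤ L * ‖a - b‖ := by
    intro a b
    have h := hvL.dist_le_mul a b
    rw [Real.dist_eq, dist_eq_norm, hLc] at h
    exact h
  have hCv : ∀ x, |v₀ x| ≤ |v₀ 0| + L * Real.sqrt n := bdd_of_per hv₀p hL hvlip
  have hCu : ∀ (x : E n) (t : ℝ), 0 ≤ t → |u x t| ≤ (|v₀ 0| + L * Real.sqrt n) + C₀ := by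
    intro x t ht
    have h1 := (hbd x t ht).1
    have h2 := (hbd x t ht).2
    have h3 := hCv x
    have h5 : |u x t| ≤ |u x t - v₀ x| + |v₀ x| := by
      calc |u x t| = |(u x t - v₀ x) + v₀ x| := by ring_nf
        _ ≤ |u x t - v₀ x| + |v₀ x| := abs_add_le _ _
    have h4 : |u x t - v₀ x| ≤ C₀ := abs_le.mpr ⟨by linarith, h2⟩
    linarith
  have hη0 := hη.1
  have hθ1 := hθ.1
  -- the key uniform decay estimate
  have key : ∀ ε : ℝ, 0 < ε → ∃ T : ℝ, ∀ t : ℝ, T ≤ t → ∀ x : E n,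
      wPlus u v₀ η θ x t ≤ ε := by
    intro ε hε
    rcases le_or_gt C₀ ε with hc | hc
    · exact ⟨1, fun t ht x => le_trans (wPlus_le_C₀ hη0 hθ1 hbd x t (by linarith)) hc⟩
    · refine ⟨1 + 2 / ψ * (C₀ - ε / 2), fun τ hτ x => ?_⟩
      have hC₀ε : 0 < C₀ - ε / 2 := by linarith
      have hΔ : 0 < 2 / ψ * (C₀ - ε / 2) := by positivity
      have hρ0 : 0 < min 1 (ε / ψ) := lt_min one_pos (by positivity)
      have hwin : (ε / 2) / 2 ≤ C₀ + ε / 2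
          - ψ / 2 * (τ + min 1 (ε / ψ) - (τ - 2 / ψ * (C₀ - ε / 2))) := by
        have hρψ : ψ / 2 * (min 1 (ε / ψ)) ≤ ε / 2 := by
          have h1 : min 1 (ε / ψ) ≤ ε / ψ := min_le_right _ _
          have h2 := mul_le_mul_of_nonneg_left h1 (by positivity : (0:ℝ) ≤ ψ / 2)
          have h3 : ψ / 2 * (ε / ψ) = ε / 2 := by field_simp
          linarith
        have harith2 : ψ / 2 * (τ + min 1 (ε / ψ) - (τ - 2 / ψ * (C₀ - ε / 2)))
            = ψ / 2 * (min 1 (ε / ψ)) + (C₀ - ε / 2) := by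
          field_simp
          ring
        rw [harith2]
        linarith
      have happ := core H hHc η θ ψ hη0 hθ1 hψ hA6' u hup husub husup huC v₀ hv₀p hv₀C hv₀sub
        C₀ hC₀ hbd L hL hulip hvlip _ _ hCv hCu
        (τ - 2 / ψ * (C₀ - ε / 2)) τ (min 1 (ε / ψ)) (ε / 2)
        (by linarith) (by linarith) hρ0 (by positivity) hwin
      have h := happ x
      have harith : ψ / 2 * (τ - (τ - 2 / ψ * (C₀ - ε / 2))) = C₀ - ε / 2 := by
        field_simp
        ring
      linarith [h, harith]
  constructor
  · intro x
    apply le_of_forall_pos_le_add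
    intro ε hε
    obtain ⟨T, hT⟩ := key ε hε
    have hev : ∀ᶠ t : ℝ in atTop, wPlus u v₀ η θ x t ≤ ε := by
      filter_upwards [eventually_ge_atTop T] with t ht
      exact hT t ht x
    have hcb : IsCoboundedUnder (· ≤ ·) atTop (fun t => wPlus u v₀ η θ x t) := by
      apply isCoboundedUnder_le_of_eventually_le atTop (x := (1 - θ) * C₀)
      filter_upwards [eventually_ge_atTop (0:ℝ)] with t ht
      exact wPlus_lower hη0 hθ1 hbd x t ht
    have h := Filter.limsup_le_of_le hcb hev
    simpa using h
  · rw [Metric.tendstoUniformly_iff]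
    intro ε hε
    obtain ⟨T, hT⟩ := key (ε / 2) (by positivity)
    filter_upwards [eventually_ge_atTop T] with t ht x
    have h1 := hT t ht x
    have h2 : max (wPlus u v₀ η θ x t) 0 ≤ ε / 2 :=
      max_le h1 (by positivity)
    have h3 : 0 ≤ max (wPlus u v₀ η θ x t) 0 := le_max_right _ _
    have h4 : dist (0:ℝ) (max (wPlus u v₀ η θ x t) 0) = max (wPlus u v₀ η θ x t) 0 := by
      rw [Real.dist_eq, zero_sub, abs_neg, abs_of_nonneg h3]
    rw [h4]
    linarith

end HJpaper
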